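/- A Schröder tree is left-directed if the rightmost child subtree of each of its internal nodes is a leaf. Let h ∈ G be the indicator function of left-directed Schröder trees (h(t) = 1 if t is left-directed, including the leaf, and h(t) = 0 otherwise), and let f_c ∈ G be the indicator function of corollas (the leaf together with, for each n ≥ 1, the tree whose root has n+1 children, all leaves). Then h = f_c⊣h, and h is the unique element of G satisfying this equation. (Thus the inverse operadic R-transform of the corolla series is the sum of all left-directed Schröder trees.) -/

import Mathlib

inductive PTree : Type where
  | node : List PTree → PTree

mutual
  def leavesT : PTree → ℕ
    | .node [] => 1
    | .node (t :: ts) => leavesT t + leavesL ts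
  def leavesL : List PTree → ℕ
    | [] => 0
    | t :: ts => leavesT t + leavesL ts
end

inductive Reduced : PTree → Prop where
  | leaf : Reduced (.node [])
  | node : ∀ ts : List PTree, 2 ≤ ts.length → (∀ t ∈ ts, Reduced t) → Reduced (.node ts)

mutual
  /-- Replace the leaves of a tree, from left to right, by the trees of a list;
  returns the resulting tree together with the unused trees of the list. -/
  def graftT : PTree → List PTree → PTree × List PTree
    | .node [], l => (l.headD (.node []), l.tail)
    | .node (c :: cs), l =>
        let p := graftL (c :: cs) l
        (.node p.1, p.2)
  def graftL : List PTree → List PTree → List PTree × List PTree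
    | [], l => ([], l)
    | c :: cs, l =>
        let p := graftT c l
        let q := graftL cs p.2
        (p.1 :: q.1, q.2)
end

/-- Schröder trees. -/
def SchT : Type := {t : PTree // Reduced t}

def leafST : SchT := ⟨.node [], Reduced.leaf⟩

/-- Decompositions `t = t₀ ∘ (t₁, …, t_n)` of a Schröder tree, where `t₀` has `n`
leaves. -/
def Decomps (t : SchT) : Set (SchT × List SchT) :=
  {p | (p.2.map Subtype.val).length = leavesT p.1.val ∧
    (graftT p.1.val (p.2.map Subtype.val)).1 = t.val}

/-- The composition product of the group of the Schröder operad: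
`(f∘g)(t) = Σ f(t₀)·g(t₁)⋯g(t_n)` over all decompositions `t = t₀∘(t₁,…,t_n)`. -/
noncomputable def compG (f g : SchT → ℚ) : SchT → ℚ :=
  fun t => ∑ᶠ p ∈ Decomps t, f p.1 * (p.2.map g).prod

/-- `(f⊣g)(t) = Σ f(t₀)·g(t₁)⋯g(t_{n−1})` over decompositions whose last entry is
the leaf. -/
noncomputable def ldash (f g : SchT → ℚ) : SchT → ℚ :=
  fun t => ∑ᶠ p ∈ {p | p ∈ Decomps t ∧ p.2.getLast? = some leafST},
    f p.1 * (p.2.dropLast.map g).prod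

/-- `(f⊢g)(t) = Σ f(t₀)·g(t_n)` over decompositions whose entries `t₁,…,t_{n−1}`
are all leaves. -/
noncomputable def rdash (f g : SchT → ℚ) : SchT → ℚ :=
  fun t => ∑ᶠ p ∈ {p | p ∈ Decomps t ∧ ∀ s ∈ p.2.dropLast, s = leafST},
    f p.1 * g (p.2.getLastD leafST)

/-- The identity element: the indicator function of the leaf. -/
def eG : SchT → ℚ := fun t =>
  match t.val with
  | .node [] => 1
  | _ => 0

/-- Left-directed plane trees: the rightmost child subtree of each internal node
is a leaf. -/
inductive LeftDirected : PTree → Prop where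
  | leaf : LeftDirected (.node [])
  | node : ∀ ts : List PTree, ts.getLast? = some (.node []) →
      (∀ t ∈ ts, LeftDirected t) → LeftDirected (.node ts)

open Classical in
/-- The indicator function of left-directed Schröder trees. -/
noncomputable def hLD : SchT → ℚ := fun t => if LeftDirected t.val then 1 else 0

/-- A corolla: all child subtrees of the root are leaves (the leaf itself is the
corolla with `ts = []`). -/
def IsCorolla (t : PTree) : Prop :=
  ∃ ts : List PTree, t = .node ts ∧ ∀ s ∈ ts, s = PTree.node []

open Classical in
/-- The series of corollas. -/
noncomputable def fc : SchT → ℚ := fun t => if IsCorolla t.val then 1 else 0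

lemma leavesL_replicate (n : ℕ) : leavesL (List.replicate n (PTree.node [])) = n := by
  induction n with
  | zero => simp [leavesL]
  | succ n ih => simp [List.replicate_succ, leavesL, leavesT, ih]; omega

lemma leavesT_corolla (n : ℕ) (hn : n ≠ 0) :
    leavesT (PTree.node (List.replicate n (PTree.node []))) = n := by
  cases n with
  | zero => exact absurd rfl hn
  | succ n => rw [List.replicate_succ]; simp [leavesT, leavesL_replicate, leavesL]; omega

lemma graftL_replicate : ∀ l : List PTree, graftL (List.replicate l.length (PTree.node [])) l = (l, []) := by
  intro l
  induction l with
  | nil => simp [graftL]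
  | cons x l ih => simp [List.replicate_succ, graftL, graftT, ih]

lemma graftT_corolla (l : List PTree) (hl : l ≠ []) :
    graftT (.node (List.replicate l.length (PTree.node []))) l = (.node l, []) := by
  cases l with
  | nil => exact absurd rfl hl
  | cons x l =>
      have h1 : (x::l).length = l.length + 1 := rfl
      have h2 := graftL_replicate (x::l)
      rw [h1, List.replicate_succ] at h2 ⊢
      simp only [graftT, h2]

lemma childRed {ts : List PTree} (hr : Reduced (.node ts)) : ∀ c ∈ ts, Reduced c := by
  cases hr with
  | leaf => intro c hc; simp at hc
  | node _ _ h => exact h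

def toSch (ts : List PTree) (hc : ∀ c ∈ ts, Reduced c) : List SchT :=
  ts.attach.map fun c => ⟨c.1, hc c.1 c.2⟩

lemma toSch_map_val (ts : List PTree) (hc : ∀ c ∈ ts, Reduced c) :
    (toSch ts hc).map Subtype.val = ts := by
  unfold toSch; exact List.map_map.trans (List.attach_map_subtype_val ts)

lemma mem_toSch {ts : List PTree} {hc : ∀ c ∈ ts, Reduced c} {s : SchT}
    (hs : s ∈ toSch ts hc) : s.val ∈ ts := by
  rw [← toSch_map_val ts hc]
  exact List.mem_map_of_mem hs

lemma map_val_inj {l1 l2 : List SchT} (h : l1.map Subtype.val = l2.map Subtype.val) : l1 = l2 :=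
  List.map_injective_iff.mpr Subtype.val_injective h

lemma fc_corolla {t : SchT} (h : IsCorolla t.val) : fc t = 1 := by simp [fc, h]

lemma fc_ne_zero {t : SchT} (h : fc t ≠ 0) : IsCorolla t.val := by
  by_contra hc; simp [fc, hc] at h

lemma corolla_decomp {ts : List PTree} (hne : ts ≠ []) (hr : Reduced (.node ts))
    {p : SchT × List SchT} (hp : p ∈ Decomps ⟨.node ts, hr⟩)
    (hlast : p.2.getLast? = some leafST) (hcor : IsCorolla p.1.val) :
    p.1.val = PTree.node (List.replicate ts.length (PTree.node [])) ∧
    p.2 = toSch ts (childRed hr) ∧ ts.getLast? = some (PTree.node []) := by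
  obtain ⟨us, hus, hall⟩ := hcor
  obtain ⟨hlen, hgr⟩ := hp
  cases us with
  | nil =>
    exfalso
    rw [hus] at hlen hgr
    have h1 : p.2.length = 1 := by simp [leavesT] at hlen; exact (List.length_map _).symm.trans hlen
    obtain ⟨u, hu⟩ := List.length_eq_one_iff.mp h1
    rw [hu] at hgr hlast
    simp only [List.map_cons, List.map_nil, graftT, List.headD] at hgr
    simp only [List.getLast?] at hlast
    have hu2 : u = leafST := by simpa using hlast
    rw [hu2] at hgr
    exact hne (by have h : PTree.node ts = PTree.node [] := hgr.symm; injection h)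
  | cons c cs =>
    have hrep : (c :: cs) = List.replicate (c::cs).length (PTree.node []) :=
      List.eq_replicate_length.mpr hall
    have hm : (c::cs).length ≠ 0 := by simp
    rw [hus, hrep] at hlen hgr
    rw [leavesT_corolla _ hm] at hlen
    have hne2 : p.2.map Subtype.val ≠ [] := by
      intro h; rw [h] at hlen; simp at hlen
    rw [show List.replicate (c::cs).length (PTree.node [])
          = List.replicate (p.2.map Subtype.val).length (PTree.node []) by rw [hlen],
        graftT_corolla _ hne2] at hgr
    have hmap : p.2.map Subtype.val = ts := by injection hgr
    have hts : p.2 = toSch ts (childRed hr) := map_val_inj (by rw [hmap, toSch_map_val])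
    have hlen2 : (c::cs).length = ts.length := by rw [← hmap, hlen]
    refine ⟨by rw [hus, hrep, hlen2], hts, ?_⟩
    rw [← hmap]; erw [List.getLast?_map, hlast]
    rfl

lemma len2 {ts : List PTree} (hr : Reduced (.node ts)) (hne : ts ≠ []) : 2 ≤ ts.length := by
  cases hr with
  | leaf => exact absurd rfl hne
  | node _ h _ => exact h

def corollaST (ts : List PTree) (hr : Reduced (.node ts)) (hne : ts ≠ []) : SchT :=
  ⟨.node (List.replicate ts.length (PTree.node [])),
    Reduced.node _ (by simpa using len2 hr hne)
      (fun t ht => (List.eq_of_mem_replicate ht) ▸ Reduced.leaf)⟩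

lemma p0_mem (ts : List PTree) (hr : Reduced (.node ts)) (hne : ts ≠ []) :
    (corollaST ts hr hne, toSch ts (childRed hr)) ∈ Decomps ⟨.node ts, hr⟩ := by
  constructor
  · show (List.map Subtype.val (toSch ts (childRed hr))).length = _
    rw [toSch_map_val, corollaST]
    rw [leavesT_corolla _ (by simpa using hne)]
  · show (graftT _ (List.map Subtype.val (toSch ts (childRed hr)))).1 = _
    rw [toSch_map_val, corollaST]
    rw [graftT_corolla _ hne]

lemma corolla_corollaST (ts : List PTree) (hr : Reduced (.node ts)) (hne : ts ≠ []) :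
    IsCorolla (corollaST ts hr hne).val :=
  ⟨_, rfl, fun s hs => List.eq_of_mem_replicate hs⟩

open Classical in
lemma ldash_fc_node (g : SchT → ℚ) (ts : List PTree) (hne : ts ≠ [])
    (hr : Reduced (.node ts)) :
    ldash fc g ⟨.node ts, hr⟩ =
      if ts.getLast? = some (PTree.node []) then
        (((toSch ts (childRed hr)).dropLast).map g).prod
      else 0 := by
  set p₀ : SchT × List SchT := (corollaST ts hr hne, toSch ts (childRed hr)) with hp₀
  set S : Set (SchT × List SchT) :=
    {p | p ∈ Decomps ⟨.node ts, hr⟩ ∧ p.2.getLast? = some leafST} with hS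
  set F : SchT × List SchT → ℚ := fun p => fc p.1 * ((p.2.dropLast).map g).prod with hF
  have key : ∀ p ∈ S, F p ≠ 0 → p = p₀ ∧ ts.getLast? = some (PTree.node []) := by
    intro p hp hFp
    have hfc : fc p.1 ≠ 0 := fun h => hFp (by rw [hF]; simp [h])
    obtain ⟨h1, h2, h3⟩ := corolla_decomp hne hr hp.1 hp.2 (fc_ne_zero hfc)
    exact ⟨Prod.ext (Subtype.ext (h1.trans rfl)) h2, h3⟩
  show (∑ᶠ p ∈ S, F p) = _
  by_cases hlast : ts.getLast? = some (PTree.node [])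
  · rw [if_pos hlast]
    have hmem : p₀ ∈ S := by
      refine ⟨p0_mem ts hr hne, ?_⟩
      have hmap : (toSch ts (childRed hr)).map Subtype.val = ts := toSch_map_val _ _
      have : ((toSch ts (childRed hr)).getLast?).map Subtype.val = some (PTree.node []) := by
        erw [← List.getLast?_map, hmap, hlast]
      obtain ⟨u, hu1, hu2⟩ := Option.map_eq_some_iff.mp this
      have : u = leafST := Subtype.ext hu2
      rw [hp₀]; show (toSch ts (childRed hr)).getLast? = some leafST
      rw [hu1, this]; rfl
    rw [finsum_mem_def]
    rw [finsum_eq_single _ p₀]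
    · rw [Set.indicator_of_mem hmem, hF]
      simp only [hp₀, fc_corolla (corolla_corollaST ts hr hne), one_mul]
    · intro p hp
      by_cases hpS : p ∈ S
      · rw [Set.indicator_of_mem hpS]
        by_contra hFp
        exact hp (key p hpS hFp).1
      · exact Set.indicator_of_notMem hpS _
  · rw [if_neg hlast, finsum_mem_def]
    apply finsum_eq_zero_of_forall_eq_zero
    intro p
    by_cases hpS : p ∈ S
    · rw [Set.indicator_of_mem hpS]
      by_contra hFp
      exact hlast (key p hpS hFp).2
    · exact Set.indicator_of_notMem hpS _

lemma ldash_fc_leaf (g : SchT → ℚ) : ldash fc g leafST = 1 := by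
  set p₀ : SchT × List SchT := (leafST, [leafST]) with hp₀
  set S : Set (SchT × List SchT) :=
    {p | p ∈ Decomps leafST ∧ p.2.getLast? = some leafST} with hS
  set F : SchT × List SchT → ℚ := fun p => fc p.1 * ((p.2.dropLast).map g).prod with hF
  have key : ∀ p ∈ S, F p ≠ 0 → p = p₀ := by
    intro p hp hFp
    have hfc : fc p.1 ≠ 0 := fun h => hFp (by rw [hF]; simp [h])
    obtain ⟨us, hus, hall⟩ := fc_ne_zero hfc
    obtain ⟨⟨hlen, hgr⟩, hlast⟩ := hp
    cases us with
    | nil =>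
      rw [hus] at hlen hgr
      have h1 : p.2.length = 1 := by simp [leavesT] at hlen; exact (List.length_map _).symm.trans hlen
      obtain ⟨u, hu⟩ := List.length_eq_one_iff.mp h1
      rw [hu] at hgr hlast
      simp only [List.map_cons, List.map_nil, graftT, List.headD] at hgr
      have hu2 : u = leafST := by simpa using hlast
      refine Prod.ext (Subtype.ext ?_) (by rw [hu, hu2])
      rw [hus]; rfl
    | cons c cs =>
      exfalso
      have hrep : (c :: cs) = List.replicate (c::cs).length (PTree.node []) :=
        List.eq_replicate_length.mpr hall
      have hm : (c::cs).length ≠ 0 := by simp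
      rw [hus, hrep] at hlen hgr
      rw [leavesT_corolla _ hm] at hlen
      have hne2 : p.2.map Subtype.val ≠ [] := by
        intro h; rw [h] at hlen; simp at hlen
      rw [show List.replicate (c::cs).length (PTree.node [])
            = List.replicate (p.2.map Subtype.val).length (PTree.node []) by rw [hlen],
          graftT_corolla _ hne2] at hgr
      exact hne2 (by injection hgr)
  have hmem : p₀ ∈ S := by
    refine ⟨⟨?_, ?_⟩, rfl⟩
    · rfl
    · rfl
  show (∑ᶠ p ∈ S, F p) = 1
  rw [finsum_mem_def, finsum_eq_single _ p₀]
  · rw [Set.indicator_of_mem hmem, hF]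
    simp [hp₀, fc, IsCorolla, leafST]
    rfl
  · intro p hp
    by_cases hpS : p ∈ S
    · rw [Set.indicator_of_mem hpS]
      by_contra hFp
      exact hp (key p hpS hFp)
    · exact Set.indicator_of_notMem hpS _

open Classical in
lemma prod_hLD (L : List SchT) :
    ((L.map hLD).prod) = if ∀ s ∈ L, LeftDirected s.val then 1 else 0 := by
  induction L with
  | nil => simp
  | cons x L ih =>
    simp only [List.map_cons, List.prod_cons, ih, hLD]
    have hiff : (∀ s ∈ x :: L, LeftDirected s.val) ↔
        (LeftDirected x.val ∧ ∀ s ∈ L, LeftDirected s.val) := by simp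
    rw [if_congr hiff rfl rfl]
    by_cases h1 : LeftDirected x.val <;> by_cases h2 : ∀ s ∈ L, LeftDirected s.val <;>
      simp [h1, h2]

lemma LD_node_iff {ts : List PTree} (hne : ts ≠ []) :
    LeftDirected (.node ts) ↔
      ts.getLast? = some (PTree.node []) ∧ ∀ c ∈ ts.dropLast, LeftDirected c := by
  constructor
  · intro h
    cases h with
    | leaf => exact absurd rfl hne
    | node _ hl hall =>
      exact ⟨hl, fun c hc => hall c ((List.dropLast_sublist _).subset hc)⟩
  · rintro ⟨hl, hall⟩
    refine LeftDirected.node ts hl ?_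
    intro c hc
    have hsplit : ts.dropLast ++ [ts.getLast hne] = ts := List.dropLast_append_getLast hne
    have hlast : ts.getLast hne = PTree.node [] := by
      have := List.getLast?_eq_getLast hne
      rw [this] at hl; injection hl
    rw [← hsplit] at hc
    rcases List.mem_append.mp hc with h | h
    · exact hall c h
    · rw [List.mem_singleton.mp h, hlast]; exact LeftDirected.leaf

lemma map_dropLast' {α β : Type*} (f : α → β) (l : List α) :
    l.dropLast.map f = (l.map f).dropLast := by
  induction l with
  | nil => simp
  | cons x l ih => cases l <;> simp_all

open Classical in
lemma hLD_node (ts : List PTree) (hne : ts ≠ []) (hr : Reduced (.node ts)) :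
    hLD ⟨.node ts, hr⟩ =
      if ts.getLast? = some (PTree.node []) then
        (((toSch ts (childRed hr)).dropLast).map hLD).prod
      else 0 := by
  rw [prod_hLD]
  have hmv : (toSch ts (childRed hr)).dropLast.map Subtype.val = ts.dropLast := by
    erw [map_dropLast', toSch_map_val]
  have hiff : (∀ s ∈ (toSch ts (childRed hr)).dropLast, LeftDirected s.val)
      ↔ ∀ c ∈ ts.dropLast, LeftDirected c := by
    constructor
    · intro h c hc
      rw [← hmv] at hc
      obtain ⟨s, hs, rfl⟩ := List.mem_map.mp hc
      exact h s hs
    · intro h s hs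
      exact h s.val (hmv ▸ List.mem_map_of_mem (f := Subtype.val) hs)
  show (if LeftDirected (PTree.node ts) then (1:ℚ) else 0) = _
  rw [LD_node_iff hne]
  by_cases h1 : ts.getLast? = some (PTree.node []) <;>
    by_cases h2 : ∀ c ∈ ts.dropLast, LeftDirected c <;>
      simp [h1, h2, hiff]

lemma hLD_leafST : hLD leafST = 1 := by
  simp [hLD, leafST, LeftDirected.leaf]

lemma part1 : hLD = ldash fc hLD := by
  funext t
  obtain ⟨tv, hr⟩ := t
  cases tv with | node ts =>
  cases ts with
  | nil =>
    have he : (⟨PTree.node [], hr⟩ : SchT) = leafST := rfl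
    rw [he, hLD_leafST, ldash_fc_leaf]
  | cons c cs =>
    have hne : (c :: cs) ≠ ([] : List PTree) := by simp
    rw [hLD_node _ hne hr, ldash_fc_node hLD _ hne hr]

lemma part2 (h' : SchT → ℚ) (h1 : h' leafST = 1) (heq : h' = ldash fc h') : h' = hLD := by
  have key : ∀ n (t : SchT), sizeOf t.val ≤ n → h' t = hLD t := by
    intro n
    induction n using Nat.strong_induction_on with
    | _ n ih =>
      intro t hsz
      obtain ⟨tv, hr⟩ := t
      cases tv with | node ts =>
      cases ts with
      | nil =>
        have he : (⟨PTree.node [], hr⟩ : SchT) = leafST := rfl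
        rw [he, h1, hLD_leafST]
      | cons c cs =>
        have hne : (c :: cs) ≠ ([] : List PTree) := by simp
        have hsz' : sizeOf (PTree.node (c :: cs)) ≤ n := hsz
        conv_lhs => rw [heq]
        rw [ldash_fc_node h' _ hne hr, hLD_node _ hne hr]
        have hAB : ((toSch (c::cs) (childRed hr)).dropLast.map h').prod
            = ((toSch (c::cs) (childRed hr)).dropLast.map hLD).prod := by
          congr 1
          apply List.map_congr_left
          intro s hs
          have hmem : s.val ∈ (c::cs) := mem_toSch ((List.dropLast_sublist _).subset hs)
          have h2 := List.sizeOf_lt_of_mem hmem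
          have h3 : sizeOf (PTree.node (c :: cs)) = 1 + sizeOf (c :: cs) := by
            simp
          exact ih (sizeOf s.val) (by omega) s le_rfl
        rw [hAB]
  funext t
  exact key (sizeOf t.val) t le_rfl

/-- the indicator function `h` of left-directed Schröder trees
satisfies `h = f_c ⊣ h`, and it is the unique element of `G` satisfying this
equation. -/
theorem stmt11 :
    hLD = ldash fc hLD ∧
    (∀ h' : SchT → ℚ, h' leafST = 1 → h' = ldash fc h' → h' = hLD) := by
  exact ⟨part1, part2⟩
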